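/- arXiv:1002.2685 — 2 statements merged into one kernel-verified Lean document; each statement's English description precedes it below -/
import Mathlib

section
/- The grading operator ϑ_{(n+1,n+1)} = (n+1)d + ∑_{i=0}^{n} i(n-i+1) α_{2i}^∨ + ∑_{i=0}^{n} ((2i+1)n - 2i²)/2 · α_{2i+1}^∨ in the affine Lie algebra of type A_{2n+1}^{(1)} satisfies (ϑ | α_{2i}^∨) = 1 and (ϑ | α_{2i+1}^∨) = 0 for all i = 0,...,n, where (·|·) is the normalized invariant form with (α_i^∨|α_j^∨) = a_{i,j} (affine Cartan matrix of type A_{2n+1}^{(1)}, indices mod 2n+2) and (d|α_j^∨) = δ_{0,j}, (d|d)=0. -/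
/-- The grading operator
`ϑ = (n+1) d + ∑_{i=0}^{n} i(n-i+1) α_{2i}^∨ + ∑_{i=0}^{n} ((2i+1)n - 2i²)/2 α_{2i+1}^∨`
of type `A_{2n+1}^(1)` satisfies `(ϑ | α_{2i}^∨) = 1` and `(ϑ | α_{2i+1}^∨) = 0`,
where `(α_i^∨ | α_j^∨) = a_{i,j}` (affine Cartan matrix, indices mod `2n+2`),
`(d | α_j^∨) = δ_{0,j}` and `(d | d) = 0`; so the pairing of `ϑ` with `α_k^∨`
is `(n+1) δ_{0,k} + ∑_j c_j a_{j,k}` with the stated coefficients `c_j`. -/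
theorem stmt_11 (n : ℕ) (hn : 1 ≤ n)
    (a : Fin (2 * n + 2) → Fin (2 * n + 2) → ℚ)
    (ha : ∀ i j, a i j = if i = j then 2 else if j = i + 1 ∨ i = j + 1 then -1 else 0)
    (c : Fin (2 * n + 2) → ℚ)
    (hc : ∀ j : Fin (2 * n + 2), c j =
      if j.val % 2 = 0 then ((j.val / 2 : ℕ) : ℚ) * ((n : ℚ) - ((j.val / 2 : ℕ) : ℚ) + 1)
      else ((2 * ((j.val / 2 : ℕ) : ℚ) + 1) * (n : ℚ) - 2 * ((j.val / 2 : ℕ) : ℚ) ^ 2) / 2)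
    (pairing : Fin (2 * n + 2) → ℚ)
    (hp : ∀ k, pairing k = ((n : ℚ) + 1) * (if k = 0 then 1 else 0) + ∑ j, c j * a j k) :
    ∀ i : Fin (n + 1),
      pairing ⟨2 * i.val, by omega⟩ = 1 ∧ pairing ⟨2 * i.val + 1, by omega⟩ = 0 := by
  have h1 : ((1 : Fin (2 * n + 2)) : ℕ) = 1 := by
    rw [Fin.val_one', Nat.mod_eq_of_lt (by omega)]
  have hmod : ∀ x y : ℕ, y ≤ x → x < 2 * y → x % y = x - y := by
    intro x y hxy hx2
    rw [Nat.mod_eq_sub_mod hxy, Nat.mod_eq_of_lt (by omega)]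
  have hA : ∀ k : Fin (2 * n + 2),
      ((k + 1 : Fin (2 * n + 2)) : ℕ) = if k.val = 2 * n + 1 then 0 else k.val + 1 := by
    intro k
    have hk := k.isLt
    rw [Fin.add_def]
    show (k.val + ((1 : Fin (2 * n + 2)) : ℕ)) % (2 * n + 2) = _
    rw [h1]
    split
    · next h => rw [h, Nat.mod_self]
    · next h => rw [Nat.mod_eq_of_lt (by omega)]
  have hS : ∀ k : Fin (2 * n + 2),
      ((k - 1 : Fin (2 * n + 2)) : ℕ) = if k.val = 0 then 2 * n + 1 else k.val - 1 := by
    intro k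
    have hk := k.isLt
    rw [Fin.sub_def]
    show (2 * n + 2 - ((1 : Fin (2 * n + 2)) : ℕ) + k.val) % (2 * n + 2) = _
    rw [h1]
    split
    · next h => rw [h, Nat.mod_eq_of_lt (by omega)]; omega
    · next h => rw [hmod _ _ (by omega) (by omega)]; omega
  have hd1 : ∀ k : Fin (2 * n + 2), k - 1 ≠ k := by
    intro k h
    have h' := congrArg Fin.val h
    rw [hS k] at h'
    have hk := k.isLt
    split at h' <;> omega
  have hd2 : ∀ k : Fin (2 * n + 2), k + 1 ≠ k := by
    intro k h
    have h' := congrArg Fin.val h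
    rw [hA k] at h'
    have hk := k.isLt
    split at h' <;> omega
  have hd3 : ∀ k : Fin (2 * n + 2), k - 1 ≠ k + 1 := by
    intro k h
    have h' := congrArg Fin.val h
    rw [hS k, hA k] at h'
    have hk := k.isLt
    split at h' <;> split at h' <;> omega
  have key : ∀ k : Fin (2 * n + 2),
      (∑ j, c j * a j k) = 2 * c k - c (k - 1) - c (k + 1) := by
    intro k
    have e : ∀ j : Fin (2 * n + 2), c j * a j k =
        (if j = k then 2 * c k else 0) +
        ((if j = k - 1 then -c (k - 1) else 0) + (if j = k + 1 then -c (k + 1) else 0)) := by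
      intro j
      rw [ha]
      by_cases hjk : j = k
      · subst hjk
        have n1 : j ≠ j - 1 := fun h => hd1 j h.symm
        have n2 : j ≠ j + 1 := fun h => hd2 j h.symm
        rw [if_pos rfl, if_pos rfl, if_neg n1, if_neg n2]
        ring
      · by_cases hj1 : j = k - 1
        · subst hj1
          have hcond : k = (k - 1) + 1 ∨ (k - 1) = k + 1 := Or.inl (sub_add_cancel k 1).symm
          rw [if_neg (hd1 k), if_neg (hd1 k), if_pos hcond, if_pos rfl, if_neg (hd3 k)]
          ring
        · by_cases hj2 : j = k + 1
          · subst hj2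
            have hcond : k = (k + 1) + 1 ∨ (k + 1) = k + 1 := Or.inr rfl
            rw [if_neg (hd2 k), if_neg (hd2 k), if_pos hcond,
              if_neg (fun h => (hd3 k) h.symm), if_pos rfl]
            ring
          · have hcond : ¬(k = j + 1 ∨ j = k + 1) := by
              rintro (h | h)
              · exact hj1 (by rw [h, add_sub_cancel_right])
              · exact hj2 h
            rw [if_neg hjk, if_neg hjk, if_neg hcond, if_neg hj1, if_neg hj2]
            ring
    rw [Finset.sum_congr rfl (fun j _ => e j), Finset.sum_add_distrib, Finset.sum_add_distrib,
      Finset.sum_ite_eq', Finset.sum_ite_eq', Finset.sum_ite_eq']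
    simp only [Finset.mem_univ, if_true]
    ring
  have even_case : ∀ (m : ℕ) (hm : m ≤ n) (h : 2 * m < 2 * n + 2),
      pairing ⟨2 * m, h⟩ = 1 := by
    intro m hm h
    set k : Fin (2 * n + 2) := ⟨2 * m, h⟩ with hk
    have hkv : k.val = 2 * m := rfl
    have hAv : ((k + 1 : Fin (2 * n + 2)) : ℕ) = 2 * m + 1 := by
      rw [hA, hkv, if_neg (by omega)]
    have c2 : c (k + 1) = ((2 * (m : ℚ) + 1) * (n : ℚ) - 2 * (m : ℚ) ^ 2) / 2 := by
      rw [hc, hAv, if_neg (by omega), show (2 * m + 1) / 2 = m by omega]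
    rcases Nat.eq_zero_or_pos m with hm0 | hm0
    · subst hm0
      have hk0 : k = 0 := by apply Fin.ext; simp [hkv]
      have hSv : ((k - 1 : Fin (2 * n + 2)) : ℕ) = 2 * n + 1 := by
        rw [hS, hkv, if_pos (by omega)]
      have c0 : c k = 0 := by
        rw [hc, hkv, if_pos (by omega)]
        norm_num
      have c1 : c (k - 1) = ((2 * (n : ℚ) + 1) * (n : ℚ) - 2 * (n : ℚ) ^ 2) / 2 := by
        rw [hc, hSv, if_neg (by omega), show (2 * n + 1) / 2 = n by omega]
      rw [hp, key, c2, c0, c1, if_pos hk0]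
      push_cast
      ring
    · obtain ⟨e, rfl⟩ : ∃ e, m = e + 1 := ⟨m - 1, by omega⟩
      have hk0 : k ≠ 0 := by
        intro h'
        have := congrArg Fin.val h'
        rw [hkv] at this
        simp at this
      have hSv : ((k - 1 : Fin (2 * n + 2)) : ℕ) = 2 * e + 1 := by
        rw [hS, hkv, if_neg (by omega)]; omega
      have c0 : c k = ((e : ℚ) + 1) * ((n : ℚ) - ((e : ℚ) + 1) + 1) := by
        rw [hc, hkv, if_pos (by omega), show 2 * (e + 1) / 2 = e + 1 by omega]
        push_cast; ring
      have c1 : c (k - 1) = ((2 * (e : ℚ) + 1) * (n : ℚ) - 2 * (e : ℚ) ^ 2) / 2 := by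
        rw [hc, hSv, if_neg (by omega), show (2 * e + 1) / 2 = e by omega]
      rw [hp, key, c2, c0, c1, if_neg hk0]
      push_cast
      ring
  have odd_case : ∀ (m : ℕ) (hm : m ≤ n) (h : 2 * m + 1 < 2 * n + 2),
      pairing ⟨2 * m + 1, h⟩ = 0 := by
    intro m hm h
    set k : Fin (2 * n + 2) := ⟨2 * m + 1, h⟩ with hk
    have hkv : k.val = 2 * m + 1 := rfl
    have hk0 : k ≠ 0 := by
      intro h'
      have := congrArg Fin.val h'
      rw [hkv] at this
      simp at this
    have hSv : ((k - 1 : Fin (2 * n + 2)) : ℕ) = 2 * m := by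
      rw [hS, hkv, if_neg (by omega)]; omega
    have c0 : c k = ((2 * (m : ℚ) + 1) * (n : ℚ) - 2 * (m : ℚ) ^ 2) / 2 := by
      rw [hc, hkv, if_neg (by omega), show (2 * m + 1) / 2 = m by omega]
    have c1 : c (k - 1) = (m : ℚ) * ((n : ℚ) - (m : ℚ) + 1) := by
      rw [hc, hSv, if_pos (by omega), show 2 * m / 2 = m by omega]
    rcases eq_or_lt_of_le hm with hmn | hmn
    · have hAv : ((k + 1 : Fin (2 * n + 2)) : ℕ) = 0 := by
        rw [hA, hkv, if_pos (by omega)]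
      have c2 : c (k + 1) = 0 := by
        rw [hc, hAv, if_pos (by omega)]
        norm_num
      rw [hp, key, c0, c1, c2, if_neg hk0, hmn]
      ring
    · have hAv : ((k + 1 : Fin (2 * n + 2)) : ℕ) = 2 * m + 2 := by
        rw [hA, hkv, if_neg (by omega)]
      have c2 : c (k + 1) = ((m : ℚ) + 1) * ((n : ℚ) - ((m : ℚ) + 1) + 1) := by
        rw [hc, hAv, if_pos (by omega), show (2 * m + 2) / 2 = m + 1 by omega]
        push_cast; ring
      rw [hp, key, c0, c1, c2, if_neg hk0]
      ring
  intro i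
  exact ⟨even_case i.val (by omega) _, odd_case i.val (by omega) _⟩
end

section
/- Given a relation ∑_{i=0}^{n} w_i φ_i = c (a constant), the 2-form identity ∑_{i=0}^{n} dφ_i ∧ dw_i = ∑_{i=0}^{n-1} d(w_n φ_i) ∧ d(w_i/w_n) holds on the locus w_n ≠ 0. -/
open Finset

/-- Given smooth functions `w_0,…,w_n, φ_0,…,φ_n` constrained by
`∑ w_i φ_i = c` (a constant), the 2-form identity
`∑_{i=0}^{n} dφ_i ∧ dw_i = ∑_{i=0}^{n-1} d(w_n φ_i) ∧ d(w_i / w_n)`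
holds at every point where `w_n ≠ 0`; here a 2-form `df ∧ dg` is evaluated on
tangent vectors `u, v` as `df(u) dg(v) - df(v) dg(u)`. -/
theorem stmt_15 {E : Type*} [NormedAddCommGroup E] [NormedSpace ℝ E]
    (n : ℕ) (w φ : Fin (n + 1) → E → ℝ) (c : ℝ)
    (hw : ∀ i, Differentiable ℝ (w i)) (hφ : ∀ i, Differentiable ℝ (φ i))
    (hc : ∀ x, ∑ i, w i x * φ i x = c)
    (x : E) (hx : w (Fin.last n) x ≠ 0) (u v : E) :
    ∑ i, (fderiv ℝ (φ i) x u * fderiv ℝ (w i) x v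
        - fderiv ℝ (φ i) x v * fderiv ℝ (w i) x u)
      = ∑ i : Fin n,
        (fderiv ℝ (fun y => w (Fin.last n) y * φ i.castSucc y) x u
            * fderiv ℝ (fun y => w i.castSucc y / w (Fin.last n) y) x v
          - fderiv ℝ (fun y => w (Fin.last n) y * φ i.castSucc y) x v
            * fderiv ℝ (fun y => w i.castSucc y / w (Fin.last n) y) x u) := by
  set N := Fin.last n with hN
  -- derivative of the inverse of w_N
  have hinv : HasFDerivAt (fun y => (w N y)⁻¹)
      ((-(w N x ^ 2)⁻¹) • fderiv ℝ (w N) x) x := by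
    have h1 := (hasDerivAt_inv hx).hasFDerivAt
    have h2 := h1.comp x (hw N x).hasFDerivAt
    exact h2.congr_fderiv (by ext z; simp [mul_comm])
  -- derivative values for the quotients
  have hq : ∀ (i : Fin n) (z : E),
      fderiv ℝ (fun y => w i.castSucc y / w N y) x z
        = (fderiv ℝ (w i.castSucc) x z * w N x
            - w i.castSucc x * fderiv ℝ (w N) x z) / w N x ^ 2 := by
    intro i z
    have h := (hw i.castSucc x).hasFDerivAt.mul hinv
    have h' : HasFDerivAt (fun y => w i.castSucc y / w N y)
        (w i.castSucc x • ((-(w N x ^ 2)⁻¹) • fderiv ℝ (w N) x)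
          + (w N x)⁻¹ • fderiv ℝ (w i.castSucc) x) x := by
      have e : (fun y => w i.castSucc y / w N y) = fun y => w i.castSucc y * (w N y)⁻¹ := by
        funext y; rw [div_eq_mul_inv]
      rw [e]
      exact h.congr_fderiv (by ext z; simp)
    rw [h'.fderiv]
    have hx2 : w N x ^ 2 ≠ 0 := pow_ne_zero 2 hx
    simp only [ContinuousLinearMap.add_apply, ContinuousLinearMap.smul_apply,
      smul_eq_mul]
    field_simp
    ring
  -- derivative values for the products
  have hp : ∀ (i : Fin n) (z : E),
      fderiv ℝ (fun y => w N y * φ i.castSucc y) x z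
        = w N x * fderiv ℝ (φ i.castSucc) x z
          + φ i.castSucc x * fderiv ℝ (w N) x z := by
    intro i z
    rw [fderiv_fun_mul (hw N x) (hφ i.castSucc x)]
    simp
  -- derivative of the constraint
  have hconstr : ∀ z : E,
      ∑ i, (w i x * fderiv ℝ (φ i) x z + φ i x * fderiv ℝ (w i) x z) = 0 := by
    intro z
    have hsum : HasFDerivAt (fun y => ∑ i, w i y * φ i y)
        (∑ i, (w i x • fderiv ℝ (φ i) x + φ i x • fderiv ℝ (w i) x)) x :=
      HasFDerivAt.fun_sum fun i _ => (hw i x).hasFDerivAt.mul (hφ i x).hasFDerivAt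
    have hconst : HasFDerivAt (fun y => ∑ i, w i y * φ i y)
        (0 : E →L[ℝ] ℝ) x := by
      have heq : (fun y => ∑ i, w i y * φ i y) = fun _ => c := funext hc
      rw [heq]; exact hasFDerivAt_const c x
    have huniq := hsum.unique hconst
    calc ∑ i, (w i x * fderiv ℝ (φ i) x z + φ i x * fderiv ℝ (w i) x z)
        = (∑ i, (w i x • fderiv ℝ (φ i) x + φ i x • fderiv ℝ (w i) x)) z := by
          simp [ContinuousLinearMap.sum_apply]
      _ = 0 := by rw [huniq]; simp
  simp only [hq, hp]
  have hSu := hconstr u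
  have hSv := hconstr v
  rw [Fin.sum_univ_castSucc] at hSu hSv
  have hSu' : ∑ i : Fin n, (w i.castSucc x * fderiv ℝ (φ i.castSucc) x u
      + φ i.castSucc x * fderiv ℝ (w i.castSucc) x u)
      = -(w N x * fderiv ℝ (φ N) x u + φ N x * fderiv ℝ (w N) x u) := by
    linarith [hSu]
  have hSv' : ∑ i : Fin n, (w i.castSucc x * fderiv ℝ (φ i.castSucc) x v
      + φ i.castSucc x * fderiv ℝ (w i.castSucc) x v)
      = -(w N x * fderiv ℝ (φ N) x v + φ N x * fderiv ℝ (w N) x v) := by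
    linarith [hSv]
  rw [Fin.sum_univ_castSucc]
  have hrw : ∀ i : Fin n,
      ((w N x * fderiv ℝ (φ i.castSucc) x u + φ i.castSucc x * fderiv ℝ (w N) x u)
          * ((fderiv ℝ (w i.castSucc) x v * w N x
              - w i.castSucc x * fderiv ℝ (w N) x v) / w N x ^ 2)
        - (w N x * fderiv ℝ (φ i.castSucc) x v + φ i.castSucc x * fderiv ℝ (w N) x v)
          * ((fderiv ℝ (w i.castSucc) x u * w N x
              - w i.castSucc x * fderiv ℝ (w N) x u) / w N x ^ 2))
      = (fderiv ℝ (φ i.castSucc) x u * fderiv ℝ (w i.castSucc) x v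
          - fderiv ℝ (φ i.castSucc) x v * fderiv ℝ (w i.castSucc) x u)
        + (fderiv ℝ (w N) x u
            * (w i.castSucc x * fderiv ℝ (φ i.castSucc) x v
              + φ i.castSucc x * fderiv ℝ (w i.castSucc) x v)
          - fderiv ℝ (w N) x v
            * (w i.castSucc x * fderiv ℝ (φ i.castSucc) x u
              + φ i.castSucc x * fderiv ℝ (w i.castSucc) x u)) / w N x := by
    intro i
    field_simp
    ring
  rw [Finset.sum_congr rfl fun i _ => hrw i, Finset.sum_add_distrib]
  have hgs : ∑ i : Fin n,
      (fderiv ℝ (w N) x u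
          * (w i.castSucc x * fderiv ℝ (φ i.castSucc) x v
            + φ i.castSucc x * fderiv ℝ (w i.castSucc) x v)
        - fderiv ℝ (w N) x v
          * (w i.castSucc x * fderiv ℝ (φ i.castSucc) x u
            + φ i.castSucc x * fderiv ℝ (w i.castSucc) x u)) / w N x
      = (fderiv ℝ (w N) x u
            * (∑ i : Fin n, (w i.castSucc x * fderiv ℝ (φ i.castSucc) x v
              + φ i.castSucc x * fderiv ℝ (w i.castSucc) x v))
          - fderiv ℝ (w N) x v
            * (∑ i : Fin n, (w i.castSucc x * fderiv ℝ (φ i.castSucc) x u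
              + φ i.castSucc x * fderiv ℝ (w i.castSucc) x u))) / w N x := by
    rw [← Finset.sum_div, Finset.sum_sub_distrib, ← Finset.mul_sum, ← Finset.mul_sum]
  rw [hgs, hSu', hSv']
  have h1 : (fderiv ℝ (w N) x u
        * -(w N x * fderiv ℝ (φ N) x v + φ N x * fderiv ℝ (w N) x v)
      - fderiv ℝ (w N) x v
        * -(w N x * fderiv ℝ (φ N) x u + φ N x * fderiv ℝ (w N) x u)) / w N x
      = fderiv ℝ (φ N) x u * fderiv ℝ (w N) x v
        - fderiv ℝ (φ N) x v * fderiv ℝ (w N) x u := by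
    field_simp
    ring
  rw [h1]
end
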